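/- Let A be a commutative ring and let I ⊆ A be an ideal which is projective as an A-module. Then for every integer m ≥ 1 the multiplication map I^{⊗_A m} → A, x₁ ⊗ ⋯ ⊗ x_m ↦ x₁·⋯·x_m, is injective, and its image is the ideal power I^m; in particular I^{⊗_A m} is isomorphic to I^m as an A-module. -/

import Mathlib

open TensorProduct

noncomputable section

/-- The iterated tensor power of an ideal: `tpowM A I k = I^{⊗(k+1)}`. -/
def tpowM (A : Type) [CommRing A] (I : Ideal A) : ℕ → ModuleCat A
  | 0 => ModuleCat.of A I
  | (k + 1) => ModuleCat.of A (↥I ⊗[A] (tpowM A I k))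

/-- The multiplication map `I^{⊗(k+1)} → A`, `x₁ ⊗ ⋯ ⊗ x_{k+1} ↦ x₁ ⋯ x_{k+1}`. -/
def mulMap (A : Type) [CommRing A] (I : Ideal A) :
    ∀ k : ℕ, (tpowM A I k : Type) →ₗ[A] A
  | 0 => I.subtype
  | (k + 1) =>
      TensorProduct.lift (((LinearMap.mul A A).comp I.subtype).compl₂ (mulMap A I k))

theorem mulMap_factor (A : Type) [CommRing A] (I : Ideal A) (k : ℕ) :
    mulMap A I (k + 1) =
      (I.subtype.comp (TensorProduct.rid A ↥I).toLinearMap).comp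
        (LinearMap.lTensor ↥I (mulMap A I k)) := by
  apply TensorProduct.ext'
  intro x t
  simp [mulMap, mul_comm]

/-- If an ideal `I` of a commutative ring `A` is projective as an `A`-module,
then for every `m ≥ 1` (here `m = k + 1`) the multiplication map
`I^{⊗m} → A` is injective with image the ideal power `I^m`; in particular
`I^{⊗m} ≅ I^m` as `A`-modules. -/
theorem stmt2 (A : Type) [CommRing A] (I : Ideal A)
    (hproj : Module.Projective A ↥I) :
    ∀ k : ℕ,
      Function.Injective (mulMap A I k) ∧
      LinearMap.range (mulMap A I k) = I ^ (k + 1) ∧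
      Nonempty ((tpowM A I k : Type) ≃ₗ[A] ↥(I ^ (k + 1))) := by
  intro k
  induction k with
  | zero =>
    refine ⟨Subtype.coe_injective, ?_, ?_⟩
    · ext x
      simp only [mulMap, zero_add, pow_one, LinearMap.mem_range]
      exact ⟨fun ⟨y, h⟩ => h ▸ y.2, fun h => ⟨⟨x, h⟩, rfl⟩⟩
    · exact ⟨(LinearEquiv.ofEq _ _ (by rw [pow_one]))⟩
  | succ k ih =>
    obtain ⟨hinj, hrange, -⟩ := ih
    have hinj' : Function.Injective (mulMap A I (k + 1)) := by
      rw [mulMap_factor]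
      exact (Subtype.coe_injective.comp (TensorProduct.rid A ↥I).injective).comp
        (Module.Flat.lTensor_preserves_injective_linearMap (M := ↥I) _ hinj)
    have hr : LinearMap.range (mulMap A I (k + 1)) = I ^ (k + 2) := by
      apply le_antisymm
      · rintro _ ⟨t, rfl⟩
        induction t using TensorProduct.induction_on with
        | zero => exact (congrArg (· ∈ I ^ (k + 2)) (map_zero (mulMap A I (k + 1)))).mpr (Submodule.zero_mem _)
        | tmul x y =>
          have : mulMap A I k y ∈ I ^ (k + 1) := hrange ▸ LinearMap.mem_range_self _ y
          have hx : (x : A) ∈ I := x.2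
          have : (x : A) * mulMap A I k y ∈ I ^ (k + 2) := by
            rw [pow_succ']
            exact Ideal.mul_mem_mul hx this
          exact (congrArg (· ∈ I ^ (k + 2)) (TensorProduct.lift.tmul (f' := ((LinearMap.mul A A).comp I.subtype).compl₂ (mulMap A I k)) x y)).mpr (by simpa using this)
        | add a b ha hb => exact (congrArg (· ∈ I ^ (k + 2)) (map_add (mulMap A I (k + 1)) a b)).mpr (Submodule.add_mem _ ha hb)
      · rw [pow_succ']
        apply Submodule.mul_le.2
        intro x hx y hy
        rw [← hrange] at hy
        obtain ⟨t, rfl⟩ := hy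
        exact ⟨(⟨x, hx⟩ : ↥I) ⊗ₜ[A] t, rfl⟩
    exact ⟨hinj', hr, ⟨(LinearEquiv.ofInjective _ hinj').trans (LinearEquiv.ofEq _ _ hr)⟩⟩

end
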